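/- arXiv:2501.11989 — 2 statements merged into one kernel-verified Lean document; each statement's English description precedes it below -/
import Mathlib

section
/- Let $n \ge 1$ be a natural number and $\alpha \in (0,n)$. Then for any compact set $K \subseteq \mathbb{R}^n$ and any $x \in \mathbb{R}^n$, one has $\int_K |x-y|^{\alpha-n}\,dy \le \alpha^{-1}\,\omega_{n-1}\,(|K|/\nu_n)^{\alpha/n}$, where $\nu_n$ is the Lebesgue measure of the unit ball in $\mathbb{R}^n$ and $\omega_{n-1} = n\nu_n$ is its surface measure. -/
open MeasureTheory Set Metric
open scoped ENNReal

noncomputable section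

lemma lintegral_fun_norm_addHaar' {E : Type*} [NormedAddCommGroup E] [NormedSpace ℝ E]
    [MeasurableSpace E] [BorelSpace E] [Nontrivial E] [FiniteDimensional ℝ E]
    (μ : Measure E) [μ.IsAddHaarMeasure] (f : ℝ → ℝ≥0∞) (hf : Measurable f) :
    ∫⁻ x, f ‖x‖ ∂μ = (Module.finrank ℝ E : ℝ≥0∞) * μ (ball 0 1) *
      ∫⁻ y in Ioi (0 : ℝ), ENNReal.ofReal (y ^ (Module.finrank ℝ E - 1)) * f y := by
  have hm : Measurable fun p : (sphere (0:E) 1) × (Ioi (0:ℝ)) => f p.2 :=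
    (hf.comp measurable_subtype_coe).comp measurable_snd
  calc ∫⁻ x, f ‖x‖ ∂μ
      = ∫⁻ x : ({(0 : E)}ᶜ : Set E), f ‖x.1‖ ∂(μ.comap (↑)) := by
        conv_lhs => rw [← restrict_compl_singleton (μ := μ) (0 : E)]
        rw [lintegral_subtype_comap (measurableSet_singleton (0:E)).compl (fun x => f ‖x‖)]
    _ = ∫⁻ p : (sphere (0:E) 1) × (Ioi (0:ℝ)), f p.2
          ∂(μ.toSphere.prod (.volumeIoiPow (Module.finrank ℝ E - 1))) :=
        by rw [← (μ.measurePreserving_homeomorphUnitSphereProd).lintegral_comp hm]; simp only [homeomorphUnitSphereProd_apply_snd_coe]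
    _ = μ.toSphere univ * ∫⁻ y, f y ∂(Measure.volumeIoiPow (Module.finrank ℝ E - 1)) := by
        rw [lintegral_prod _ hm.aemeasurable]
        simp [lintegral_const, mul_comm]
    _ = (Module.finrank ℝ E : ℝ≥0∞) * μ (ball 0 1) *
          ∫⁻ y, f y ∂(Measure.volumeIoiPow (Module.finrank ℝ E - 1)) := by
        rw [μ.toSphere_apply_univ]
    _ = (Module.finrank ℝ E : ℝ≥0∞) * μ (ball 0 1) *
          ∫⁻ y in Ioi (0 : ℝ), ENNReal.ofReal (y ^ (Module.finrank ℝ E - 1)) * f y := by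
        congr 1
        rw [Measure.volumeIoiPow, lintegral_withDensity_eq_lintegral_mul _
          ((measurable_subtype_coe.pow_const _).ennreal_ofReal)
          (g := fun y : Ioi (0:ℝ) => f ↑y) (hf.comp measurable_subtype_coe)]
        exact lintegral_subtype_comap measurableSet_Ioi
          (fun y => ENNReal.ofReal (y ^ (Module.finrank ℝ E - 1)) * f y)

lemma lintegral_ball_rpow (n : ℕ) (hn : 1 ≤ n) (α : ℝ) (hα : 0 < α) (hαn : α < n)
    (r : ℝ) (hr : 0 < r) :
    ∫⁻ y in ball (0 : EuclideanSpace ℝ (Fin n)) r,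
        ENNReal.ofReal (‖y‖ ^ (α - (n : ℝ))) =
      (n : ℝ≥0∞) * volume (ball (0 : EuclideanSpace ℝ (Fin n)) 1) *
        ENNReal.ofReal (r ^ α / α) := by
  haveI : Nontrivial (EuclideanSpace ℝ (Fin n)) :=
    Module.nontrivial_of_finrank_pos (R := ℝ)
      (by rw [finrank_euclideanSpace_fin]; exact hn)
  set f : ℝ → ℝ≥0∞ := (Iio r).indicator (fun t => ENNReal.ofReal (t ^ (α - (n:ℝ))))
    with hf_def
  have hf : Measurable f :=
    Measurable.indicator ((measurable_id.pow_const _).ennreal_ofReal) measurableSet_Iio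
  have hfe : ∀ y : EuclideanSpace ℝ (Fin n),
      (ball (0 : EuclideanSpace ℝ (Fin n)) r).indicator
        (fun y => ENNReal.ofReal (‖y‖ ^ (α - (n:ℝ)))) y = f ‖y‖ := by
    intro y
    by_cases h : y ∈ ball (0 : EuclideanSpace ℝ (Fin n)) r
    · rw [indicator_of_mem h, hf_def, indicator_of_mem (by simpa [mem_ball_zero_iff] using h)]
    · rw [indicator_of_notMem h, hf_def,
        indicator_of_notMem (by simpa [mem_ball_zero_iff] using h)]
  have key := lintegral_fun_norm_addHaar' (volume : Measure (EuclideanSpace ℝ (Fin n))) f hf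
  rw [← lintegral_indicator measurableSet_ball, funext hfe, key, finrank_euclideanSpace_fin]
  congr 1
  -- compute the radial integral
  have hIoo : ∫⁻ y in Ioi (0:ℝ), ENNReal.ofReal (y ^ (n - 1)) * f y
      = ∫⁻ y in Ioo (0:ℝ) r, ENNReal.ofReal (y ^ (α - 1)) := by
    have : ∀ y : ℝ, ENNReal.ofReal (y ^ (n - 1)) * f y
        = (Iio r).indicator (fun y => ENNReal.ofReal (y ^ (n-1)) *
            ENNReal.ofReal (y ^ (α - (n:ℝ)))) y := by
      intro y
      by_cases h : y ∈ Iio r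
      · rw [hf_def]; simp [indicator_of_mem h]
      · rw [hf_def]; simp [indicator_of_notMem h]
    rw [funext this, lintegral_indicator measurableSet_Iio,
      Measure.restrict_restrict measurableSet_Iio]
    rw [show Iio r ∩ Ioi (0:ℝ) = Ioo 0 r by rw [inter_comm, Ioi_inter_Iio]]
    refine setLIntegral_congr_fun measurableSet_Ioo (fun y hy => ?_)
    rw [← ENNReal.ofReal_mul (pow_nonneg hy.1.le _)]
    congr 1
    have hy0 : (0:ℝ) < y := hy.1
    rw [← Real.rpow_natCast y (n-1), ← Real.rpow_add hy0]
    congr 1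
    rw [Nat.cast_sub hn]
    push_cast
    ring
  rw [hIoo]
  have hint : IntegrableOn (fun y : ℝ => y ^ (α - 1)) (Ioo 0 r) volume := by
    have h1 : IntervalIntegrable (fun y : ℝ => y ^ (α - 1)) volume 0 r :=
      intervalIntegral.intervalIntegrable_rpow' (by linarith)
    exact ((intervalIntegrable_iff_integrableOn_Ioc_of_le hr.le).1 h1).mono_set Ioo_subset_Ioc_self
  rw [← ofReal_integral_eq_lintegral_ofReal hint
    ((ae_restrict_mem measurableSet_Ioo).mono fun y hy => Real.rpow_nonneg hy.1.le _)]
  congr 1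
  rw [Measure.restrict_congr_set Ioo_ae_eq_Ioc, ← intervalIntegral.integral_of_le hr.le,
    integral_rpow (Or.inl (by linarith))]
  rw [sub_add_cancel, Real.zero_rpow hα.ne', sub_zero]

theorem stmt_0 (n : ℕ) (hn : 1 ≤ n) (α : ℝ) (hα : 0 < α) (hαn : α < n)
    (K : Set (EuclideanSpace ℝ (Fin n))) (hK : IsCompact K)
    (x : EuclideanSpace ℝ (Fin n)) :
    (∫ y in K, ‖x - y‖ ^ (α - (n : ℝ))) ≤
      α⁻¹ * ((n : ℝ) * (volume (Metric.ball (0 : EuclideanSpace ℝ (Fin n)) 1)).toReal) *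
        ((volume K).toReal /
            (volume (Metric.ball (0 : EuclideanSpace ℝ (Fin n)) 1)).toReal) ^ (α / n) := by
  haveI : Nontrivial (EuclideanSpace ℝ (Fin n)) :=
    Module.nontrivial_of_finrank_pos (R := ℝ)
      (by rw [finrank_euclideanSpace_fin]; exact hn)
  set ν : ℝ≥0∞ := volume (ball (0 : EuclideanSpace ℝ (Fin n)) 1) with hν_def
  have hν0 : ν ≠ 0 := (measure_ball_pos _ _ one_pos).ne'
  have hνtop : ν ≠ ⊤ := measure_ball_lt_top.ne
  have hνR : 0 < ν.toReal := ENNReal.toReal_pos hν0 hνtop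
  have hKtop : volume K ≠ ⊤ := (hK.measure_lt_top (μ := volume)).ne
  have hαn' : α - (n : ℝ) < 0 := by linarith
  -- trivial case: |K| = 0
  by_cases hK0 : volume K = 0
  · rw [setIntegral_measure_zero _ hK0, hK0]
    rw [ENNReal.toReal_zero, zero_div, Real.zero_rpow (by positivity : α / n ≠ 0), mul_zero]
  -- main case
  have hkR : 0 < (volume K).toReal := ENNReal.toReal_pos hK0 hKtop
  set k : ℝ := (volume K).toReal with hk_def
  set r : ℝ := (k / ν.toReal) ^ ((n : ℝ)⁻¹) with hr_def
  have hkν : 0 < k / ν.toReal := div_pos hkR hνR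
  have hr : 0 < r := Real.rpow_pos_of_pos hkν _
  have hn0 : (n : ℝ) ≠ 0 := by positivity
  have hrn : r ^ n = k / ν.toReal := by
    rw [hr_def, ← Real.rpow_natCast ((k / ν.toReal) ^ ((n:ℝ)⁻¹)) n, ← Real.rpow_mul hkν.le,
      inv_mul_cancel₀ hn0, Real.rpow_one]
  set B : Set (EuclideanSpace ℝ (Fin n)) := ball x r with hB_def
  have hBvol : volume B = volume K := by
    rw [hB_def, Measure.addHaar_ball _ _ hr.le, finrank_euclideanSpace_fin, hrn,
      ENNReal.ofReal_div_of_pos hνR, ENNReal.ofReal_toReal hKtop, ENNReal.ofReal_toReal hνtop,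
      ENNReal.div_mul_cancel hν0 hνtop]
  set g : EuclideanSpace ℝ (Fin n) → ℝ≥0∞ := fun y => ENNReal.ofReal (‖x - y‖ ^ (α - (n:ℝ))) with hg_def
  have hgm : Measurable g :=
    (((measurable_const.sub measurable_id).norm).pow_const _).ennreal_ofReal
  have hKm : MeasurableSet K := hK.measurableSet
  have hBm : MeasurableSet B := measurableSet_ball
  -- the key rearrangement inequality
  have hmain : ∫⁻ y in K, g y ≤ ∫⁻ y in B, g y := by
    have hsplitK := lintegral_inter_add_diff (μ := volume) g K hBm
    have hsplitB := lintegral_inter_add_diff (μ := volume) g B hKm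
    have hfinKB : volume (K ∩ B) ≠ ⊤ :=
      (lt_of_le_of_lt (measure_mono inter_subset_left) (hK.measure_lt_top (μ := volume))).ne
    have hvols : volume (K \ B) = volume (B \ K) := by
      have h1 : volume (K ∩ B) + volume (K \ B) = volume K := measure_inter_add_diff K hBm
      have h2 : volume (B ∩ K) + volume (B \ K) = volume B := measure_inter_add_diff B hKm
      rw [inter_comm] at h2
      rw [hBvol, ← h1] at h2
      exact (ENNReal.add_right_inj hfinKB).1 h2.symm
    have hub : ∫⁻ y in K \ B, g y ≤ ENNReal.ofReal (r ^ (α - (n:ℝ))) * volume (K \ B) := by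
      rw [← setLIntegral_const]
      refine setLIntegral_mono measurable_const fun y hy => ?_
      rw [hg_def]
      refine ENNReal.ofReal_le_ofReal ?_
      have hyr : r ≤ ‖x - y‖ := by
        have := hy.2
        rw [hB_def, mem_ball, not_lt, dist_eq_norm, ← norm_neg] at this
        simpa [neg_sub] using this
      exact Real.rpow_le_rpow_of_nonpos hr hyr hαn'.le
    have hlb : ENNReal.ofReal (r ^ (α - (n:ℝ))) * volume (B \ K) ≤ ∫⁻ y in B \ K, g y := by
      rw [← setLIntegral_const]
      refine setLIntegral_mono_ae hgm.aemeasurable ?_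
      have hxne : ∀ᵐ y : EuclideanSpace ℝ (Fin n) ∂volume, y ≠ x := by
        rw [ae_iff]
        simpa using measure_singleton (μ := (volume : Measure (EuclideanSpace ℝ (Fin n)))) x
      filter_upwards [hxne] with y hy hyBK
      rw [hg_def]
      refine ENNReal.ofReal_le_ofReal ?_
      have h1 : 0 < ‖x - y‖ := by
        rw [norm_pos_iff, sub_ne_zero]; exact fun h => hy h.symm
      have h2 : ‖x - y‖ ≤ r := by
        have := hyBK.1
        rw [hB_def, mem_ball, dist_eq_norm, ← norm_neg] at this
        simpa [neg_sub] using this.le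
      exact Real.rpow_le_rpow_of_nonpos h1 h2 hαn'.le
    calc ∫⁻ y in K, g y = (∫⁻ y in K ∩ B, g y) + ∫⁻ y in K \ B, g y := hsplitK.symm
      _ ≤ (∫⁻ y in K ∩ B, g y) + ∫⁻ y in B \ K, g y := by
          refine add_le_add le_rfl (hub.trans ?_)
          rw [hvols]; exact hlb
      _ = (∫⁻ y in B ∩ K, g y) + ∫⁻ y in B \ K, g y := by rw [inter_comm]
      _ = ∫⁻ y in B, g y := hsplitB
  -- compute ∫⁻ over the ball via translation
  have hBval : ∫⁻ y in B, g y = (n : ℝ≥0∞) * ν * ENNReal.ofReal (r ^ α / α) := by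
    have hmp : MeasurePreserving (fun y : EuclideanSpace ℝ (Fin n) => x - y) volume volume :=
      Measure.measurePreserving_sub_left volume x
    have hpre : (fun y : EuclideanSpace ℝ (Fin n) => x - y) ⁻¹' (ball (0 : EuclideanSpace ℝ (Fin n)) r) = B := by
      ext y
      simp [hB_def, mem_ball, dist_eq_norm, norm_sub_rev]
    have := hmp.setLIntegral_comp_preimage (s := ball (0 : EuclideanSpace ℝ (Fin n)) r)
      measurableSet_ball (f := fun z => ENNReal.ofReal (‖z‖ ^ (α - (n:ℝ))))
      ((measurable_norm.pow_const _).ennreal_ofReal)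
    rw [hpre] at this
    rw [hg_def]
    calc ∫⁻ y in B, ENNReal.ofReal (‖x - y‖ ^ (α - (n:ℝ)))
        = ∫⁻ z in ball (0 : EuclideanSpace ℝ (Fin n)) r, ENNReal.ofReal (‖z‖ ^ (α - (n:ℝ))) := this
      _ = (n : ℝ≥0∞) * ν * ENNReal.ofReal (r ^ α / α) :=
          lintegral_ball_rpow n hn α hα hαn r hr
  -- put everything together
  have hVtop : (n : ℝ≥0∞) * ν * ENNReal.ofReal (r ^ α / α) ≠ ⊤ :=
    ENNReal.mul_ne_top (ENNReal.mul_ne_top (ENNReal.natCast_ne_top n) hνtop)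
      ENNReal.ofReal_ne_top
  have hLHS : (∫ y in K, ‖x - y‖ ^ (α - (n : ℝ))) = (∫⁻ y in K, g y).toReal := by
    rw [integral_eq_lintegral_of_nonneg_ae
      (ae_of_all _ fun y => Real.rpow_nonneg (norm_nonneg _) _)
      ((((measurable_const.sub measurable_id).norm).pow_const _).aestronglyMeasurable)]
  rw [hLHS]
  have hle : (∫⁻ y in K, g y).toReal ≤ ((n : ℝ≥0∞) * ν * ENNReal.ofReal (r ^ α / α)).toReal :=
    ENNReal.toReal_mono hVtop (hmain.trans_eq hBval)
  refine hle.trans_eq ?_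
  rw [ENNReal.toReal_mul, ENNReal.toReal_mul, ENNReal.toReal_natCast,
    ENNReal.toReal_ofReal (by positivity)]
  have hrα : r ^ α = (k / ν.toReal) ^ (α / (n:ℝ)) := by
    rw [hr_def, ← Real.rpow_mul hkν.le, inv_mul_eq_div]
  rw [hrα]
  ring
end
end

section
/- Let $s \in (0,1)$, $p \in (1,\infty)$ with $sp < n$, and $\sigma > 0$ with $2\sigma + sp < n$. Set $f(r) = (1+r^2)^{(sp-n+\sigma)/(2(p-1))}$ for $r > 0$. Then for every $t \in (0,1)$ and $r \in (0,\infty)$, $t^{sp-n}\,\big(f(r) - f(r t^{-1})\big)^{p-1} > \big(f(rt) - f(r)\big)^{p-1}$. -/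
noncomputable section

/-- Convexity inequality for `x ^ α` with nonpositive exponent `α`, on positive reals. -/
lemma rpow_neg_exp_convex {α : ℝ} (hα : α ≤ 0) {x y a b : ℝ} (hx : 0 < x) (hy : 0 < y)
    (ha : 0 ≤ a) (hb : 0 ≤ b) (hab : a + b = 1) :
    (a * x + b * y) ^ α ≤ a * x ^ α + b * y ^ α := by
  have hxy : 0 < a * x + b * y := by
    rcases ha.lt_or_eq with h | h
    · nlinarith [mul_pos h hx, mul_nonneg hb hy.le]
    · have hb1 : b = 1 := by linarith
      simpa [← h, hb1] using hy
  have hlog : a * Real.log x + b * Real.log y ≤ Real.log (a * x + b * y) := by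
    have := strictConcaveOn_log_Ioi.concaveOn.2 (Set.mem_Ioi.2 hx) (Set.mem_Ioi.2 hy)
      ha hb hab
    simpa [smul_eq_mul] using this
  have h1 : α * Real.log (a * x + b * y) ≤ a * (α * Real.log x) + b * (α * Real.log y) := by
    nlinarith [mul_le_mul_of_nonpos_left hlog hα]
  have h2 : Real.exp (a * (α * Real.log x) + b * (α * Real.log y)) ≤
      a * Real.exp (α * Real.log x) + b * Real.exp (α * Real.log y) := by
    have := convexOn_exp.2 (Set.mem_univ (α * Real.log x)) (Set.mem_univ (α * Real.log y))
      ha hb hab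
    simpa [smul_eq_mul] using this
  calc (a * x + b * y) ^ α = Real.exp (α * Real.log (a * x + b * y)) := by
        rw [Real.rpow_def_of_pos hxy]; ring_nf
    _ ≤ Real.exp (a * (α * Real.log x) + b * (α * Real.log y)) := Real.exp_le_exp.2 h1
    _ ≤ a * Real.exp (α * Real.log x) + b * Real.exp (α * Real.log y) := h2
    _ = a * x ^ α + b * y ^ α := by
        rw [Real.rpow_def_of_pos hx, Real.rpow_def_of_pos hy]; ring_nf

/-- Two-point inequality for the convex function `x ^ α`, `α ≤ 0`:
if `u ≤ a ≤ v` and `a + b = u + v` then `a ^ α + b ^ α ≤ u ^ α + v ^ α`. -/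
lemma rpow_neg_exp_two_point {α : ℝ} (hα : α ≤ 0) {u v a b : ℝ} (hu : 0 < u)
    (hua : u ≤ a) (hav : a ≤ v) (hsum : a + b = u + v) :
    a ^ α + b ^ α ≤ u ^ α + v ^ α := by
  rcases eq_or_lt_of_le (le_trans hua hav) with h | huv
  · have ha' : a = u := le_antisymm (h ▸ hav) hua
    have hb' : b = v := by linarith
    simp [ha', hb']
  · have hv : 0 < v := lt_trans hu huv
    set l : ℝ := (v - a) / (v - u) with hl
    set m : ℝ := (a - u) / (v - u) with hm
    have hvu : 0 < v - u := by linarith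
    have hl0 : 0 ≤ l := div_nonneg (by linarith) hvu.le
    have hm0 : 0 ≤ m := div_nonneg (by linarith) hvu.le
    have hlm : l + m = 1 := by
      rw [hl, hm, ← add_div, div_eq_one_iff_eq hvu.ne']; ring
    have hA : a = l * u + m * v := by
      rw [hl, hm]; field_simp; ring
    have hB : b = m * u + l * v := by
      have hb : b = u + v - a := by linarith
      rw [hb, hm, hl]; field_simp; ring
    have k1 : (l * u + m * v) ^ α ≤ l * u ^ α + m * v ^ α :=
      rpow_neg_exp_convex hα hu hv hl0 hm0 hlm
    have k2 : (m * u + l * v) ^ α ≤ m * u ^ α + l * v ^ α :=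
      rpow_neg_exp_convex hα hu hv hm0 hl0 (by linarith)
    have hsum' : l * u ^ α + m * v ^ α + (m * u ^ α + l * v ^ α) = u ^ α + v ^ α := by
      have hm1 : m = 1 - l := by linarith
      rw [hm1]; ring
    rw [hA, hB]
    linarith [k1, k2]

set_option maxHeartbeats 1000000 in
theorem stmt_13 (n : ℕ) (s p σ : ℝ) (hs : s ∈ Set.Ioo (0 : ℝ) 1) (hp : 1 < p)
    (hspn : s * p < n) (hσ : 0 < σ) (hσ' : 2 * σ + s * p < n)
    (f : ℝ → ℝ) (hf : ∀ r : ℝ, f r = (1 + r ^ 2) ^ ((s * p - n + σ) / (2 * (p - 1))))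
    (t r : ℝ) (ht : t ∈ Set.Ioo (0 : ℝ) 1) (hr : 0 < r) :
    t ^ (s * p - n) * (f r - f (r * t⁻¹)) ^ (p - 1) > (f (r * t) - f r) ^ (p - 1) := by
  obtain ⟨hs0, hs1⟩ := hs
  obtain ⟨ht0, ht1⟩ := ht
  have hp1 : (0:ℝ) < p - 1 := by linarith
  set α : ℝ := (s * p - n + σ) / (2 * (p - 1)) with hαdef
  have hαneg : α < 0 := div_neg_of_neg_of_pos (by linarith) (by linarith)
  have h1r : (0:ℝ) < 1 + r ^ 2 := by positivity
  have h1rt : (0:ℝ) < 1 + (r * t) ^ 2 := by positivity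
  have h1rit : (0:ℝ) < 1 + (r * t⁻¹) ^ 2 := by positivity
  have hfr := hf r
  have hfrt := hf (r * t)
  have hfrit := hf (r * t⁻¹)
  -- Y = f(rt) - f(r) > 0
  have hY : 0 < f (r * t) - f r := by
    have hlt : 1 + (r * t) ^ 2 < 1 + r ^ 2 := by
      nlinarith [mul_pos (mul_pos hr hr) (mul_pos (sub_pos.2 ht1) (by linarith : (0:ℝ) < 1 + t))]
    have := Real.rpow_lt_rpow_of_neg h1rt hlt hαneg
    rw [hfr, hfrt]; linarith
  -- X = f(r) - f(r/t) > 0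
  have hti : 1 < t⁻¹ := (one_lt_inv₀ ht0).2 ht1
  have hX : 0 < f r - f (r * t⁻¹) := by
    have hti2 : 1 < t⁻¹ ^ 2 := by nlinarith
    have hlt : 1 + r ^ 2 < 1 + (r * t⁻¹) ^ 2 := by
      nlinarith [mul_pos (mul_pos hr hr) (sub_pos.2 hti2)]
    have := Real.rpow_lt_rpow_of_neg h1r hlt hαneg
    rw [hfr, hfrit]; linarith
  -- t^(2α) = (t²)^α
  have ht2 : t ^ (2 * α) = (t ^ 2) ^ α := by
    rw [← Real.rpow_natCast t 2, ← Real.rpow_mul ht0.le]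
    norm_num
  -- key identity : t^(2α) * f(r/t) = (t² + r²)^α
  have hkey : t ^ (2 * α) * f (r * t⁻¹) = (t ^ 2 + r ^ 2) ^ α := by
    rw [hfrit, ht2, ← Real.mul_rpow (by positivity) h1rit.le]
    congr 1
    field_simp
  -- u = t²(1+r²)
  have hu : (t ^ 2 * (1 + r ^ 2)) ^ α = t ^ (2 * α) * f r := by
    rw [hfr, ht2, Real.mul_rpow (by positivity) h1r.le]
  -- convexity (two-point) inequality
  have hconv : (1 + (r * t) ^ 2) ^ α + (t ^ 2 + r ^ 2) ^ α ≤
      (t ^ 2 * (1 + r ^ 2)) ^ α + (1 + r ^ 2) ^ α := by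
    have ht2le : t ^ 2 ≤ 1 := by nlinarith
    refine rpow_neg_exp_two_point hαneg.le (by positivity) ?_ ?_ (by ring)
    · nlinarith [mul_nonneg (mul_nonneg hr.le hr.le) (sub_nonneg.2 ht2le)]
    · nlinarith [mul_nonneg (mul_nonneg hr.le hr.le) (sub_nonneg.2 ht2le)]
  -- hence f(rt) - f(r) ≤ t^(2α) (f(r) - f(r/t))
  have hstep : f (r * t) - f r ≤ t ^ (2 * α) * (f r - f (r * t⁻¹)) := by
    rw [hu, ← hkey, ← hfrt, ← hfr] at hconv
    linarith [hconv]
  -- strictness via β = (sp-n)/(p-1)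
  set β : ℝ := (s * p - n) / (p - 1) with hβdef
  have hδ : β - 2 * α < 0 := by
    have : β - 2 * α = -σ / (p - 1) := by
      rw [hβdef, hαdef]; field_simp; ring
    rw [this]
    exact div_neg_of_neg_of_pos (by linarith) hp1
  have hδ1 : 1 < t ^ (β - 2 * α) :=
    Real.one_lt_rpow_of_pos_of_lt_one_of_neg ht0 ht1 hδ
  have hsplit : t ^ β = t ^ (β - 2 * α) * t ^ (2 * α) := by
    rw [← Real.rpow_add ht0]; ring_nf
  have hcore : f (r * t) - f r < t ^ β * (f r - f (r * t⁻¹)) := by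
    have h2 : 0 < t ^ (2 * α) * (f r - f (r * t⁻¹)) :=
      mul_pos (Real.rpow_pos_of_pos ht0 _) hX
    calc f (r * t) - f r ≤ t ^ (2 * α) * (f r - f (r * t⁻¹)) := hstep
      _ < t ^ (β - 2 * α) * (t ^ (2 * α) * (f r - f (r * t⁻¹))) := by nlinarith
      _ = t ^ β * (f r - f (r * t⁻¹)) := by rw [hsplit]; ring
  -- finish: raise to the power p-1
  have hβeq : t ^ (s * p - n) = (t ^ β) ^ (p - 1) := by
    rw [← Real.rpow_mul ht0.le]
    congr 1
    rw [hβdef]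
    field_simp
  show (f (r * t) - f r) ^ (p - 1) < _
  rw [hβeq, ← Real.mul_rpow (Real.rpow_nonneg ht0.le _) hX.le]
  exact Real.rpow_lt_rpow hY.le hcore hp1
end
end
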